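/- Let K be a max cone in ℝ≥0^n. If the set of scaled extremals of K is closed in ℝ≥0^n and generates K, then K is closed in ℝ≥0^n. -/

import Mathlib

open scoped NNReal

/-- The max-algebraic span of `S`: all vectors `⨆_{x ∈ S} λ_x • x` where only
finitely many coefficients `λ_x` are nonzero (`MaxSpan ∅ = {0}`). -/
def MaxSpan {n : ℕ} (S : Set (Fin n → ℝ≥0)) : Set (Fin n → ℝ≥0) :=
  {u | ∃ (F : Finset (Fin n → ℝ≥0)) (lam : (Fin n → ℝ≥0) → ℝ≥0),
    ↑F ⊆ S ∧ u = F.sup (fun x => lam x • x)}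

/-- A max cone: a subset of `ℝ≥0ⁿ` closed under pointwise max `⊔` and under
multiplication by nonnegative scalars. -/
def MaxCone {n : ℕ} (K : Set (Fin n → ℝ≥0)) : Prop :=
  0 ∈ K ∧ (∀ x ∈ K, ∀ y ∈ K, x ⊔ y ∈ K) ∧ (∀ (c : ℝ≥0), ∀ x ∈ K, c • x ∈ K)

/-- `u` is an extremal in `K` if `u = v ⊔ w` with `v, w ∈ K` implies `u = v` or `u = w`. -/
def IsExtremal {n : ℕ} (K : Set (Fin n → ℝ≥0)) (u : Fin n → ℝ≥0) : Prop :=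
  u ∈ K ∧ ∀ v ∈ K, ∀ w ∈ K, u = v ⊔ w → u = v ∨ u = w

/-- A vector is scaled if its max norm `⨆ i, x i` equals `1`. -/
def Scaled {n : ℕ} (x : Fin n → ℝ≥0) : Prop := (⨆ i, x i) = 1

/-- The support of a vector. -/
def supp {n : ℕ} (v : Fin n → ℝ≥0) : Set (Fin n) := {j | 0 < v j}

/-- For `j ∈ supp u`, `rescale u j = (1 / u j) • u`, the `j`-scaling `u(j)`. -/
noncomputable def rescale {n : ℕ} (u : Fin n → ℝ≥0) (j : Fin n) : Fin n → ℝ≥0 :=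
  (u j)⁻¹ • u

/-- `T(j) = {u(j) : u ∈ T, j ∈ supp u}`. -/
noncomputable def setScale {n : ℕ} (T : Set (Fin n → ℝ≥0)) (j : Fin n) :
    Set (Fin n → ℝ≥0) :=
  {y | ∃ u ∈ T, j ∈ supp u ∧ y = rescale u j}

/-- `u` is minimal in `T` if `v ∈ T` and `v ≤ u` imply `v = u`. -/
def MinimalIn {n : ℕ} (T : Set (Fin n → ℝ≥0)) (u : Fin n → ℝ≥0) : Prop :=
  u ∈ T ∧ ∀ v ∈ T, v ≤ u → v = u

/-- A set is totally dependent if each of its elements is a max combination of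
the remaining ones. -/
def TotallyDependent {n : ℕ} (S : Set (Fin n → ℝ≥0)) : Prop :=
  ∀ x ∈ S, x ∈ MaxSpan (S \ {x})

/-- A set is independent if none of its elements is a max combination of
the remaining ones. -/
def IndependentSet {n : ℕ} (S : Set (Fin n → ℝ≥0)) : Prop :=
  ∀ x ∈ S, x ∉ MaxSpan (S \ {x})

/-- A basis for `K` is an independent set of generators for `K`. -/
def IsBasis {n : ℕ} (S K : Set (Fin n → ℝ≥0)) : Prop :=
  IndependentSet S ∧ MaxSpan S = K

/-- if the set of scaled extremals of a max cone `K` is closed and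
generates `K`, then `K` is closed. -/
theorem stmt15 {n : ℕ} (K : Set (Fin n → ℝ≥0)) (hK : MaxCone K)
    (hcl : IsClosed {x | IsExtremal K x ∧ Scaled x})
    (hgen : MaxSpan {x | IsExtremal K x ∧ Scaled x} = K) :
    IsClosed K := by
  set E : Set (Fin n → ℝ≥0) := {x | IsExtremal K x ∧ Scaled x} with hE
  -- finite sup achieved
  have hmax : ∀ (j : Fin n) (f : Fin n → ℝ≥0), ∃ i, f i = ⨆ k, f k := by
    intro j f
    have : Nonempty (Fin n) := ⟨j⟩
    obtain ⟨i, hi⟩ := Finite.exists_max f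
    exact ⟨i, le_antisymm (le_ciSup (Set.Finite.bddAbove (Set.finite_range f)) i)
      (ciSup_le hi)⟩
  rcases E.eq_empty_or_nonempty with hEe | ⟨x₀, hx₀⟩
  · -- E empty: K = {0}
    rw [hEe] at hgen
    have hK0 : K = {0} := by
      ext u
      constructor
      · rintro hu
        rw [← hgen] at hu
        obtain ⟨F, lam, hFsub, hu⟩ := hu
        have hF : F = ∅ := by
          rw [← Finset.coe_eq_empty, ← Set.subset_empty_iff]; exact hFsub
        subst hF
        simp only [Finset.sup_empty] at hu
        simp only [Set.mem_singleton_iff, hu]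
        rfl
      · rintro rfl
        rw [← hgen]
        exact ⟨∅, fun _ => 0, by simp, by simp; rfl⟩
    rw [hK0]; exact isClosed_singleton
  · -- E nonempty
    apply isClosed_of_closure_subset
    intro u hu
    set R : ℝ≥0 := (⨆ i, u i) + 1 with hR
    set U : Set (Fin n → ℝ≥0) := Set.univ.pi (fun _ => Set.Iio R) with hU
    have hUopen : IsOpen U := isOpen_set_pi Set.finite_univ (fun _ _ => isOpen_Iio)
    have huU : u ∈ U := by
      intro i _
      exact lt_of_le_of_lt (le_ciSup (Set.Finite.bddAbove (Set.finite_range u)) i)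
        (lt_add_of_pos_right _ one_pos)
    -- E is compact
    have hEsub : E ⊆ Set.univ.pi (fun _ => Set.Icc (0:ℝ≥0) 1) := by
      intro x hx i _
      refine ⟨zero_le, ?_⟩
      have := le_ciSup (Set.Finite.bddAbove (Set.finite_range x)) i
      rw [hx.2] at this
      exact this
    have hEc : IsCompact E :=
      (isCompact_univ_pi fun _ => isCompact_Icc).of_isClosed_subset hcl hEsub
    set D : Set ((Fin n → ℝ≥0) × (Fin n → Fin n → ℝ≥0)) :=
      (Set.univ.pi fun _ => Set.Icc 0 R) ×ˢ (Set.univ.pi fun _ => E) with hD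
    have hDc : IsCompact D :=
      (isCompact_univ_pi fun _ => isCompact_Icc).prod (isCompact_univ_pi fun _ => hEc)
    set Φ : ((Fin n → ℝ≥0) × (Fin n → Fin n → ℝ≥0)) → (Fin n → ℝ≥0) :=
      fun p => fun i => Finset.univ.sup (fun j => p.1 j * p.2 j i) with hΦ
    have hΦc : Continuous Φ := by
      apply continuous_pi
      intro i
      have h : Continuous (Finset.univ.sup (fun (j : Fin n)
          (p : (Fin n → ℝ≥0) × (Fin n → Fin n → ℝ≥0)) => p.1 j * p.2 j i)) := by
        apply Continuous.finset_sup
        intro j _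
        have h1 : Continuous (fun p : (Fin n → ℝ≥0) × (Fin n → Fin n → ℝ≥0) => p.1 j) :=
          (continuous_apply j).comp continuous_fst
        have h2 : Continuous (fun p : (Fin n → ℝ≥0) × (Fin n → Fin n → ℝ≥0) => p.2 j i) := by
          have : Continuous (fun q : Fin n → Fin n → ℝ≥0 => q j i) :=
            (continuous_apply i).comp (continuous_apply j)
          exact this.comp continuous_snd
        exact h1.mul h2
      convert h using 1
      ext p
      rw [Finset.sup_apply]
    have hCc : IsCompact (Φ '' D) := hDc.image hΦc
    -- image inside K
    have hCK : Φ '' D ⊆ K := by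
      rintro _ ⟨p, hp, rfl⟩
      have hΦeq : Φ p = Finset.univ.sup (fun j => p.1 j • p.2 j) := by
        funext i
        rw [Finset.sup_apply]
        rfl
      rw [hΦeq]
      apply Finset.sup_induction
      · exact hK.1
      · exact fun a ha b hb => hK.2.1 a ha b hb
      · intro j _
        exact hK.2.2 (p.1 j) (p.2 j) (hp.2 j (Set.mem_univ j)).1.1
    -- K ∩ U inside image
    have hKU : U ∩ K ⊆ Φ '' D := by
      rintro v ⟨hvU, hvK⟩
      rw [← hgen] at hvK
      obtain ⟨F, lam, hFsub, hv⟩ := hvK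
      have key : ∀ j : Fin n, ∃ c : ℝ≥0, ∃ x : Fin n → ℝ≥0,
          x ∈ E ∧ c ≤ R ∧ c * x j = v j ∧ ∀ i, c * x i ≤ v i := by
        intro j
        by_cases hvj : v j = 0
        · exact ⟨0, x₀, hx₀, zero_le, by simp [hvj], fun i => by simp⟩
        · have hvsup : ∀ i, v i = F.sup (fun x => lam x * x i) := by
            intro i
            rw [hv, Finset.sup_apply]
            rfl
          have hFne : F.Nonempty := by
            rcases F.eq_empty_or_nonempty with rfl | h
            · exfalso; apply hvj; rw [hvsup j]; simp
            · exact h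
          obtain ⟨x, hxF, hxeq⟩ := Finset.exists_mem_eq_sup F hFne (fun x => lam x * x j)
          have hxE : x ∈ E := hFsub hxF
          have hle : ∀ i, lam x * x i ≤ v i := by
            intro i
            rw [hvsup i]
            exact Finset.le_sup (f := fun x => lam x * x i) hxF
          obtain ⟨i₀, hi₀⟩ := hmax j x
          have hx1 : x i₀ = 1 := by rw [hi₀]; exact hxE.2
          have hcR : lam x ≤ R := by
            have := hle i₀
            rw [hx1, mul_one] at this
            exact this.trans (le_of_lt (hvU i₀ (Set.mem_univ i₀)))
          exact ⟨lam x, x, hxE, hcR, by rw [← hxeq]; exact (hvsup j).symm, hle⟩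
      choose c xx hxE hcR hcx hcle using key
      refine ⟨(c, xx), ⟨fun j _ => ⟨zero_le, hcR j⟩, fun j _ => hxE j⟩, ?_⟩
      funext i
      apply le_antisymm
      · exact Finset.sup_le fun j _ => hcle j i
      · rw [← hcx i]
        exact Finset.le_sup (f := fun j => c j * xx j i) (Finset.mem_univ i)
    -- conclude
    have : u ∈ closure (U ∩ K) := hUopen.inter_closure ⟨huU, hu⟩
    have : u ∈ closure (Φ '' D) := closure_mono hKU this
    rw [hCc.isClosed.closure_eq] at this
    exact hCK this
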